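/- In the open book consisting of three copies of [0,1]² glued along the edge {0}×[0,1], let aⁱ = (α_i, β_i) lie in the interior of the i-th page (α_i ∈ (0,1)) with αᵢ < Σ_{j≠i} αⱼ for each i. Then the point (0, (β₁+β₂+β₃)/3) on the spine is the unique minimizer of the sum of squared distances to the three points. -/
import Mathlib


/-- Distance in the open book: three pages `[0,1]²` indexed by `Fin 3`,
glued along the spine `{0} × [0,1]`. -/
noncomputable def bookDist (p q : Fin 3 × ℝ × ℝ) : ℝ :=
  if p.1 = q.1 then Real.sqrt ((p.2.1 - q.2.1) ^ 2 + (p.2.2 - q.2.2) ^ 2)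
  else Real.sqrt ((p.2.1 + q.2.1) ^ 2 + (p.2.2 - q.2.2) ^ 2)

set_option maxHeartbeats 2000000 in
theorem stmt_7 (α β : Fin 3 → ℝ) (hα : ∀ i, α i ∈ Set.Ioo (0:ℝ) 1)
    (hβ : ∀ i, β i ∈ Set.Icc (0:ℝ) 1)
    (hsticky : ∀ i, α i < ∑ j ∈ Finset.univ.erase i, α j) :
    ∀ i : Fin 3, ∀ s t : ℝ, 0 ≤ s → s ≤ 1 → 0 ≤ t → t ≤ 1 →
      ¬(s = 0 ∧ t = (β 0 + β 1 + β 2) / 3) →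
      (∑ j : Fin 3, bookDist (i, 0, (β 0 + β 1 + β 2) / 3) (j, α j, β j) ^ 2) <
        ∑ j : Fin 3, bookDist (i, s, t) (j, α j, β j) ^ 2 := by
  intro i s t hs hs1 ht ht1 hne
  obtain ⟨h0a, h0b⟩ := hα 0
  obtain ⟨h1a, h1b⟩ := hα 1
  obtain ⟨h2a, h2b⟩ := hα 2
  have hst : 0 < s ∨ t ≠ (β 0 + β 1 + β 2) / 3 := by
    rcases eq_or_lt_of_le hs with h | h
    · exact Or.inr fun ht' => hne ⟨h.symm, ht'⟩
    · exact Or.inl h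
  have hsq : ∀ x : ℝ, 0 ≤ x → Real.sqrt x ^ 2 = x := fun x hx => Real.sq_sqrt hx
  have hst2 : 3 * s ^ 2 + 3 * (t - (β 0 + β 1 + β 2) / 3) ^ 2 > 0 ∨ 0 < s := by
    rcases hst with h | h
    · exact Or.inr h
    · left
      have : (t - (β 0 + β 1 + β 2) / 3) ^ 2 > 0 :=
        lt_of_le_of_ne (sq_nonneg _) (Ne.symm (pow_ne_zero 2 (sub_ne_zero.mpr h)))
      nlinarith [sq_nonneg s]
  have hk0 := hsticky 0
  have hk1 := hsticky 1
  have hk2 := hsticky 2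
  simp only [Finset.sum_erase_eq_sub (Finset.mem_univ _), Fin.sum_univ_three] at hk0 hk1 hk2
  fin_cases i <;>
  · simp only [Fin.sum_univ_three, bookDist, Fin.ext_iff, Fin.isValue, Fin.val_zero,
      Fin.val_one, Fin.val_two, Nat.reduceEqDiff, reduceIte, if_true, if_false]
    rw [hsq _ (by positivity), hsq _ (by positivity), hsq _ (by positivity),
        hsq _ (by positivity), hsq _ (by positivity), hsq _ (by positivity)]
    rcases hst2 with h | h
    · nlinarith [mul_nonneg hs (show (0:ℝ) ≤ α 1 + α 2 - α 0 by linarith),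
        mul_nonneg hs (show (0:ℝ) ≤ α 0 + α 2 - α 1 by linarith),
        mul_nonneg hs (show (0:ℝ) ≤ α 0 + α 1 - α 2 by linarith)]
    · nlinarith [sq_nonneg s, sq_nonneg (t - (β 0 + β 1 + β 2) / 3),
        mul_pos h (show (0:ℝ) < α 1 + α 2 - α 0 by linarith),
        mul_pos h (show (0:ℝ) < α 0 + α 2 - α 1 by linarith),
        mul_pos h (show (0:ℝ) < α 0 + α 1 - α 2 by linarith)]
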